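/- Let t be a rational number with t ≠ 0 and t^4+6t^2-3 ≠ 0. Set u = t(t^4-2t^2+5), v = 5t^4-2t^2+1, X = (3t^4-6t^2-1)/(t(t^4+6t^2-3)), and Y = 4(t-1)(t+1)(t^2+1)^2(t^2+2t-1)(t^2-2t-1)(t^8+20t^6-26t^4+20t^2+1)/(t(t^4+6t^2-3)^2). Then Y^2 = (Xu-v)(Xu+v)(Xv-u)(Xv+u). -/

import Mathlib

theorem elliptic_curve_point (t : ℚ) (ht : t ≠ 0) (ht' : t ^ 4 + 6 * t ^ 2 - 3 ≠ 0)
    (u v X Y : ℚ)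
    (hu : u = t * (t ^ 4 - 2 * t ^ 2 + 5))
    (hv : v = 5 * t ^ 4 - 2 * t ^ 2 + 1)
    (hX : X = (3 * t ^ 4 - 6 * t ^ 2 - 1) / (t * (t ^ 4 + 6 * t ^ 2 - 3)))
    (hY : Y = 4 * (t - 1) * (t + 1) * (t ^ 2 + 1) ^ 2 * (t ^ 2 + 2 * t - 1)
      * (t ^ 2 - 2 * t - 1) * (t ^ 8 + 20 * t ^ 6 - 26 * t ^ 4 + 20 * t ^ 2 + 1)
      / (t * (t ^ 4 + 6 * t ^ 2 - 3) ^ 2)) :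
    Y ^ 2 = (X * u - v) * (X * u + v) * (X * v - u) * (X * v + u) := by
  subst hu hv hX hY
  have h : t * (t ^ 4 + 6 * t ^ 2 - 3) ≠ 0 := mul_ne_zero ht ht'
  have h' : t ^ 2 * (t ^ 2 + 6) - 3 ≠ 0 := fun h0 => ht' (by linear_combination h0)
  field_simp
  ring
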